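/- arXiv:2202.03790 — 2 statements merged into one kernel-verified Lean document; each statement's English description precedes it below -/
import Mathlib

section
/- Let A be a bounded linear operator on H. Then for every real number r ≥ 1 and every α ∈ [0,1], ber(A)^{2r} ≤ (α/2)·ber(A²)^r + ber((1 − 3α/4)·|A|^{2r} + (α/4)·|A*|^{2r}). -/
set_option synthInstance.maxHeartbeats 1000000
set_option maxHeartbeats 1000000

open scoped NNReal
open ContinuousLinearMap

/-- The Berezin number of an operator `T`, relative to the family `k` of
(normalized reproducing kernel) vectors indexed by `Ω`. -/
noncomputable def ber {H : Type*} [NormedAddCommGroup H] [InnerProductSpace ℂ H]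
    {Ω : Type*} (k : Ω → H) (T : H →L[ℂ] H) : ℝ :=
  ⨆ lam : Ω, ‖(inner ℂ (T (k lam)) (k lam) : ℂ)‖

/-- The absolute value `|T| = (T*T)^(1/2)` of a bounded operator. -/
noncomputable def opAbs {H : Type*} [NormedAddCommGroup H] [InnerProductSpace ℂ H]
    [CompleteSpace H] (T : H →L[ℂ] H) : H →L[ℂ] H :=
  CFC.sqrt (adjoint T * T)

section Aux

set_option linter.unusedSectionVars false

lemma tangent {r s v : ℝ} (hr : 1 ≤ r) (hs : 0 ≤ s) (hv : 0 ≤ v) :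
    r * s ^ (r - 1) * v ≤ v ^ r + (r - 1) * s ^ r := by
  rcases eq_or_lt_of_le hr with h1 | h1
  · subst h1; simp [Real.rpow_one]
  have hr0 : 0 < r := by linarith
  have key := Real.geom_mean_le_arith_mean2_weighted (by positivity : (0:ℝ) ≤ 1/r)
    (by rw [sub_nonneg, div_le_one hr0]; exact hr : (0:ℝ) ≤ 1 - 1/r)
    (by positivity : (0:ℝ) ≤ v ^ r) (by positivity : (0:ℝ) ≤ s ^ r) (by ring)
  have h2 : (v ^ r) ^ (1/r) = v := by
    rw [← Real.rpow_mul hv]; rw [mul_one_div, div_self hr0.ne', Real.rpow_one]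
  have h3 : (s ^ r) ^ (1 - 1/r) = s ^ (r - 1) := by
    rw [← Real.rpow_mul hs]; congr 1; field_simp
  rw [h2, h3] at key
  have := mul_le_mul_of_nonneg_left key hr0.le
  calc r * s ^ (r-1) * v = r * (v * s ^ (r-1)) := by ring
    _ ≤ r * (1/r * v ^ r + (1 - 1/r) * s ^ r) := this
    _ = v ^ r + (r - 1) * s ^ r := by field_simp

variable {H : Type*} [NormedAddCommGroup H] [InnerProductSpace ℂ H] [CompleteSpace H]
variable {Ω : Type*} [Nonempty Ω]

lemma buzano (e a b : H) (he : ‖e‖ = 1) :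
    ‖(inner ℂ a e : ℂ) * (inner ℂ e b : ℂ)‖ ≤ (‖(inner ℂ a b : ℂ)‖ + ‖a‖ * ‖b‖) / 2 := by
  set X : H := (2 : ℂ) • (inner ℂ e a : ℂ) • e - a with hX
  have key : (2:ℂ) * ((inner ℂ a e : ℂ) * inner ℂ e b) = inner ℂ a b + inner ℂ X b := by
    rw [hX, inner_sub_left, inner_smul_left, inner_smul_left]
    rw [inner_conj_symm]
    push_cast
    ring_nf
    rw [map_ofNat]
  have hnorm : ‖X‖ = ‖a‖ := by
    have h1 : ‖X‖ ^ 2 = ‖a‖ ^ 2 := by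
      rw [hX, @norm_sub_sq ℂ]
      have h2 : ‖(2:ℂ) • (inner ℂ e a : ℂ) • e‖ = 2 * ‖(inner ℂ e a : ℂ)‖ := by
        rw [norm_smul, norm_smul, he]; simp
      have h3 : RCLike.re (inner ℂ ((2:ℂ) • (inner ℂ e a : ℂ) • e) a : ℂ)
          = 2 * ‖(inner ℂ e a : ℂ)‖ ^ 2 := by
        rw [inner_smul_left, inner_smul_left]
        simp only [map_ofNat, RCLike.conj_mul]
        norm_num
        rw [← Complex.ofReal_pow, Complex.ofReal_re]
      rw [h2, h3]
      ring
    have h2 := (sq_eq_sq_iff_abs_eq_abs _ _).mp h1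
    rwa [abs_of_nonneg (norm_nonneg _), abs_of_nonneg (norm_nonneg _)] at h2
  have hfin : 2 * ‖(inner ℂ a e : ℂ) * (inner ℂ e b : ℂ)‖ ≤ ‖(inner ℂ a b : ℂ)‖ + ‖a‖ * ‖b‖ := by
    calc 2 * ‖(inner ℂ a e : ℂ) * (inner ℂ e b : ℂ)‖
        = ‖(2:ℂ) * ((inner ℂ a e : ℂ) * inner ℂ e b)‖ := by rw [norm_mul]; norm_num
      _ = ‖(inner ℂ a b : ℂ) + inner ℂ X b‖ := by rw [key]
      _ ≤ ‖(inner ℂ a b : ℂ)‖ + ‖(inner ℂ X b : ℂ)‖ := norm_add_le _ _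
      _ ≤ ‖(inner ℂ a b : ℂ)‖ + ‖X‖ * ‖b‖ := by
          gcongr; exact norm_inner_le_norm X b
      _ = ‖(inner ℂ a b : ℂ)‖ + ‖a‖ * ‖b‖ := by rw [hnorm]
  linarith

lemma mccarthy (A : H →L[ℂ] H) (x : H) (hx : ‖x‖ = 1) (r : ℝ) (hr : 1 ≤ r) :
    (‖A x‖ ^ 2) ^ r ≤ RCLike.re (inner ℂ ((CFC.rpow (opAbs A) (2*r)) x) x : ℂ) := by
  have hr0 : (0:ℝ) < r := lt_of_lt_of_le one_pos hr
  set T : H →L[ℂ] H := adjoint A * A with hTdef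
  have hT : 0 ≤ T := by simpa [star_eq_adjoint] using star_mul_self_nonneg A
  set S : H →L[ℂ] H := opAbs A with hSdef
  have hS : 0 ≤ S := CFC.sqrt_nonneg _
  have hS2 : S ^ 2 = T := CFC.sq_sqrt T hT
  set s : ℝ := ‖A x‖ ^ 2 with hsdef
  have hs0 : 0 ≤ s := by positivity
  have hsinner : RCLike.re (inner ℂ (T x) x : ℂ) = s := by
    rw [hTdef]
    rw [mul_apply_eq_comp]
    rw [adjoint_inner_left]
    rw [show (inner ℂ (A x) (A x) : ℂ) = (inner ℂ (A x) (A x) : ℂ) from rfl]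
    rw [hsdef]
    exact inner_self_eq_norm_sq (A x)
  set c1 : ℝ≥0 := (r * s ^ (r-1)).toNNReal with hc1
  set c2 : ℝ≥0 := ((r - 1) * s ^ r).toNNReal with hc2
  have hc1' : (c1 : ℝ) = r * s ^ (r-1) := Real.coe_toNNReal _ (by positivity)
  have hc2' : (c2 : ℝ) = (r - 1) * s ^ r :=
    Real.coe_toNNReal _ (mul_nonneg (by linarith) (by positivity))
  -- operator inequality
  have key : cfc (fun u : ℝ≥0 => c1 * u ^ 2) S ≤ cfc (fun u : ℝ≥0 => u ^ (2*r) + c2) S := by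
    apply cfc_mono
    · intro u hu
      rw [← NNReal.coe_le_coe]
      push_cast
      have h1 : ((u : ℝ) ^ (2*r : ℝ)) = ((u:ℝ) ^ 2) ^ r := by
        rw [Real.rpow_mul u.coe_nonneg, Real.rpow_two]
      rw [h1, hc1', hc2']
      exact tangent hr hs0 (by positivity)
    · exact Continuous.continuousOn (by continuity)
    · apply ContinuousOn.add
      · exact (NNReal.continuous_rpow_const (by positivity)).continuousOn
      · exact Continuous.continuousOn (by continuity)
  have lhs_eq : cfc (fun u : ℝ≥0 => c1 * u ^ 2) S = c1 • T := by
    rw [cfc_const_mul c1 (fun u : ℝ≥0 => u ^ 2) S (by fun_prop), cfc_pow_id S 2 hS, hS2]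
  have rhs_eq : cfc (fun u : ℝ≥0 => u ^ (2*r) + c2) S
      = CFC.rpow S (2*r) + algebraMap ℝ≥0 (H →L[ℂ] H) c2 := by
    rw [cfc_add S (fun u : ℝ≥0 => u ^ (2*r)) (fun _ => c2)
      ((NNReal.continuous_rpow_const (by positivity)).continuousOn) (by fun_prop)]
    rw [cfc_const c2 S hS]
    rfl
  rw [lhs_eq, rhs_eq] at key
  -- take inner products
  have hmono : RCLike.re (inner ℂ ((c1 • T) x) x : ℂ)
      ≤ RCLike.re (inner ℂ ((CFC.rpow S (2*r) + algebraMap ℝ≥0 (H →L[ℂ] H) c2) x) x : ℂ) := by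
    have h := ((le_def _ _).mp key).re_inner_nonneg_left x
    have h' : (0:ℝ) ≤ RCLike.re (inner ℂ (((CFC.rpow S (2*r) + algebraMap ℝ≥0 (H →L[ℂ] H) c2) - c1 • T) x) x : ℂ) := h
    rw [sub_apply, inner_sub_left, map_sub] at h'
    linarith
  have hL : RCLike.re (inner ℂ ((c1 • T) x) x : ℂ) = (c1:ℝ) * s := by
    rw [NNReal.smul_def, smul_apply, RCLike.real_smul_eq_coe_smul (K := ℂ), inner_smul_left]
    simp [RCLike.conj_ofReal, hsinner]
  have hR : RCLike.re (inner ℂ ((CFC.rpow S (2*r) + algebraMap ℝ≥0 (H →L[ℂ] H) c2) x) x : ℂ)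
      = RCLike.re (inner ℂ ((CFC.rpow S (2*r)) x) x : ℂ) + (c2:ℝ) := by
    have h1 : (algebraMap ℝ≥0 (H →L[ℂ] H) c2) = (c2 : ℝ) • (1 : H →L[ℂ] H) := by
      rw [Algebra.algebraMap_eq_smul_one, NNReal.smul_def]
    rw [h1, add_apply, inner_add_left, map_add, smul_apply, one_apply_eq_self,
      RCLike.real_smul_eq_coe_smul (K := ℂ), inner_smul_left]
    simp [RCLike.conj_ofReal, inner_self_eq_norm_sq x, hx]
  rw [hL, hR] at hmono
  have hfin : (c1:ℝ) * s - (c2:ℝ) = s ^ r := by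
    rw [hc1', hc2']
    have h5 : s ^ (r - 1) * s = s ^ r := by
      nth_rewrite 2 [← Real.rpow_one s]
      rw [← Real.rpow_add' hs0 (by simp; linarith)]
      norm_num
    calc r * s ^ (r-1) * s - (r - 1) * s ^ r = r * (s ^ (r-1) * s) - (r-1) * s ^ r := by ring
      _ = s ^ r := by rw [h5]; ring
  linarith

lemma jensen3 (w1 w2 w3 u1 u2 u3 r : ℝ) (hw1 : 0 ≤ w1) (hw2 : 0 ≤ w2) (hw3 : 0 ≤ w3)
    (hsum : w1 + w2 + w3 = 1) (hu1 : 0 ≤ u1) (hu2 : 0 ≤ u2) (hu3 : 0 ≤ u3) (hr : 1 ≤ r) :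
    (w1*u1 + w2*u2 + w3*u3) ^ r ≤ w1*u1^r + w2*u2^r + w3*u3^r := by
  have h := Real.rpow_arith_mean_le_arith_mean_rpow Finset.univ ![w1,w2,w3] ![u1,u2,u3]
    (by intro i _; fin_cases i <;> simpa) (by simp [Fin.sum_univ_three]; linarith)
    (by intro i _; fin_cases i <;> simpa) hr
  simpa [Fin.sum_univ_three] using h

lemma pointwise (A : H →L[ℂ] H) (x : H) (hx : ‖x‖ = 1) (r : ℝ) (hr : 1 ≤ r)
    (α : ℝ) (hα : α ∈ Set.Icc (0 : ℝ) 1) :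
    ‖(inner ℂ (A x) x : ℂ)‖ ^ (2 * r) ≤
      α / 2 * ‖(inner ℂ ((A * A) x) x : ℂ)‖ ^ r
        + RCLike.re (inner ℂ (((1 - 3 * α / 4) • CFC.rpow (opAbs A) (2 * r)
            + (α / 4) • CFC.rpow (opAbs (adjoint A)) (2 * r)) x) x : ℂ) := by
  obtain ⟨hα0, hα1⟩ := hα
  set w2 : ℝ := 1 - 3 * α / 4 with hw2def
  set w3 : ℝ := α / 4 with hw3def
  set a : ℝ := ‖(inner ℂ (A x) x : ℂ)‖ with hadef
  have ha : 0 ≤ a := norm_nonneg _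
  set u1 : ℝ := ‖(inner ℂ ((A * A) x) x : ℂ)‖ with hu1def
  have hu1 : 0 ≤ u1 := norm_nonneg _
  set u2 : ℝ := ‖A x‖ ^ 2 with hu2def
  set u3 : ℝ := ‖adjoint A x‖ ^ 2 with hu3def
  have hu2 : 0 ≤ u2 := by positivity
  have hu3 : 0 ≤ u3 := by positivity
  -- Buzano step
  have hbuz : a ^ 2 ≤ (u1 + ‖A x‖ * ‖adjoint A x‖) / 2 := by
    have h := buzano x (A x) (adjoint A x) hx
    rw [adjoint_inner_right] at h
    have h2 : (inner ℂ (A x) (adjoint A x) : ℂ) = inner ℂ ((A * A) x) x := by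
      rw [adjoint_inner_right, mul_apply_eq_comp]
    rw [h2] at h
    calc a ^ 2 = ‖(inner ℂ (A x) x : ℂ) * (inner ℂ (A x) x : ℂ)‖ := by
          rw [norm_mul, hadef]; ring
      _ ≤ (u1 + ‖A x‖ * ‖adjoint A x‖) / 2 := h
  -- Cauchy–Schwarz step
  have hcs : a ^ 2 ≤ u2 := by
    have h := norm_inner_le_norm (𝕜 := ℂ) (A x) x
    rw [hx, mul_one] at h
    calc a ^ 2 ≤ ‖A x‖ ^ 2 := by nlinarith
      _ = u2 := rfl
  -- AM-GM
  have hamgm : ‖A x‖ * ‖adjoint A x‖ ≤ (u2 + u3) / 2 := by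
    nlinarith [sq_nonneg (‖A x‖ - ‖adjoint A x‖)]
  -- convex combination
  have hcomb : a ^ 2 ≤ α / 2 * u1 + (1 - 3 * α / 4) * u2 + α / 4 * u3 := by
    nlinarith [mul_le_mul_of_nonneg_left hbuz hα0, mul_le_mul_of_nonneg_left hcs (by linarith : (0:ℝ) ≤ 1 - α), mul_le_mul_of_nonneg_left hamgm hα0]
  have hw2 : (0:ℝ) ≤ 1 - 3 * α / 4 := by linarith
  -- Jensen
  have hjen : (a ^ 2) ^ r ≤ α / 2 * u1 ^ r + (1 - 3 * α / 4) * u2 ^ r + α / 4 * u3 ^ r := by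
    calc (a ^ 2) ^ r ≤ (α / 2 * u1 + (1 - 3 * α / 4) * u2 + α / 4 * u3) ^ r := by
          apply Real.rpow_le_rpow (by positivity) hcomb (by linarith)
      _ ≤ _ := jensen3 _ _ _ _ _ _ _ (by linarith) hw2 (by linarith) (by ring) hu1 hu2 hu3 hr
  -- McCarthy
  have hmc2 : u2 ^ r ≤ RCLike.re (inner ℂ ((CFC.rpow (opAbs A) (2*r)) x) x : ℂ) :=
    mccarthy A x hx r hr
  have hmc3 : u3 ^ r ≤ RCLike.re (inner ℂ ((CFC.rpow (opAbs (adjoint A)) (2*r)) x) x : ℂ) :=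
    mccarthy (adjoint A) x hx r hr
  -- assemble the operator inner ℂ product
  have hop : (1 - 3 * α / 4) * RCLike.re (inner ℂ ((CFC.rpow (opAbs A) (2*r)) x) x : ℂ)
      + α / 4 * RCLike.re (inner ℂ ((CFC.rpow (opAbs (adjoint A)) (2*r)) x) x : ℂ)
      = RCLike.re (inner ℂ (((1 - 3 * α / 4) • CFC.rpow (opAbs A) (2 * r)
            + (α / 4) • CFC.rpow (opAbs (adjoint A)) (2 * r)) x) x : ℂ) := by
    rw [add_apply, inner_add_left, map_add, smul_apply, smul_apply,
      RCLike.real_smul_eq_coe_smul (K := ℂ), RCLike.real_smul_eq_coe_smul (K := ℂ),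
      inner_smul_real_left, inner_smul_real_left, RCLike.smul_re, RCLike.smul_re]
  have h2r : a ^ (2 * r) = (a ^ 2) ^ r := by
    rw [Real.rpow_mul ha, Real.rpow_two]
  rw [h2r]
  calc (a ^ 2) ^ r ≤ α / 2 * u1 ^ r + (1 - 3 * α / 4) * u2 ^ r + α / 4 * u3 ^ r := hjen
    _ ≤ α / 2 * u1 ^ r + ((1 - 3 * α / 4) * RCLike.re (inner ℂ ((CFC.rpow (opAbs A) (2*r)) x) x : ℂ)
        + α / 4 * RCLike.re (inner ℂ ((CFC.rpow (opAbs (adjoint A)) (2*r)) x) x : ℂ)) := by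
          have := mul_le_mul_of_nonneg_left hmc2 hw2
          have := mul_le_mul_of_nonneg_left hmc3 (by linarith : (0:ℝ) ≤ α / 4)
          linarith
    _ = _ := by rw [hop]

lemma ber_bddAbove (k : Ω → H) (hk : ∀ lam, ‖k lam‖ = 1) (T : H →L[ℂ] H) :
    BddAbove (Set.range fun lam => ‖(inner ℂ (T (k lam)) (k lam) : ℂ)‖) := by
  refine ⟨‖T‖, ?_⟩
  rintro _ ⟨lam, rfl⟩
  calc ‖(inner ℂ (T (k lam)) (k lam) : ℂ)‖ ≤ ‖T (k lam)‖ * ‖k lam‖ := norm_inner_le_norm _ _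
    _ = ‖T (k lam)‖ := by rw [hk lam, mul_one]
    _ ≤ ‖T‖ := by simpa [hk lam] using T.le_opNorm (k lam)

lemma le_ber (k : Ω → H) (hk : ∀ lam, ‖k lam‖ = 1) (T : H →L[ℂ] H) (lam : Ω) :
    ‖(inner ℂ (T (k lam)) (k lam) : ℂ)‖ ≤ ber k T :=
  le_ciSup (ber_bddAbove k hk T) lam

lemma ber_nonneg (k : Ω → H) (T : H →L[ℂ] H) : 0 ≤ ber k T :=
  Real.iSup_nonneg fun _ => norm_nonneg _

end Aux

theorem berezin_power_inequality_with_square'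
    {H : Type*} [NormedAddCommGroup H] [InnerProductSpace ℂ H] [CompleteSpace H]
    {Ω : Type*} [Nonempty Ω] (k : Ω → H) (hk : ∀ lam, ‖k lam‖ = 1)
    (A : H →L[ℂ] H) (r : ℝ) (hr : 1 ≤ r) (α : ℝ) (hα : α ∈ Set.Icc (0 : ℝ) 1) :
    ber k A ^ (2 * r) ≤
      α / 2 * ber k (A * A) ^ r
        + ber k ((1 - 3 * α / 4) • CFC.rpow (opAbs A) (2 * r)
            + (α / 4) • CFC.rpow (opAbs (adjoint A)) (2 * r)) := by
  obtain ⟨hα0, hα1⟩ := hα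
  set B : H →L[ℂ] H := (1 - 3 * α / 4) • CFC.rpow (opAbs A) (2 * r)
            + (α / 4) • CFC.rpow (opAbs (adjoint A)) (2 * r) with hBdef
  set M : ℝ := α / 2 * ber k (A * A) ^ r + ber k B with hMdef
  have h2r : (0:ℝ) < 2 * r := by linarith
  have hpt : ∀ lam : Ω, ‖(inner ℂ (A (k lam)) (k lam) : ℂ)‖ ^ (2 * r) ≤ M := by
    intro lam
    have h := pointwise A (k lam) (hk lam) r hr α ⟨hα0, hα1⟩
    refine h.trans ?_
    rw [hMdef]
    have h1 : ‖(inner ℂ ((A * A) (k lam)) (k lam) : ℂ)‖ ^ r ≤ ber k (A * A) ^ r :=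
      Real.rpow_le_rpow (norm_nonneg _) (le_ber k hk (A * A) lam) (by linarith)
    have h2 : RCLike.re (inner ℂ (B (k lam)) (k lam) : ℂ) ≤ ber k B := by
      calc RCLike.re (inner ℂ (B (k lam)) (k lam) : ℂ) ≤ ‖(inner ℂ (B (k lam)) (k lam) : ℂ)‖ :=
            RCLike.re_le_norm _
        _ ≤ ber k B := le_ber k hk B lam
    have h3 : 0 ≤ α / 2 := by linarith
    have := mul_le_mul_of_nonneg_left h1 h3
    linarith
  have hM : 0 ≤ M :=
    le_trans (Real.rpow_nonneg (norm_nonneg _) _) (hpt (Classical.arbitrary Ω))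
  have hber : ber k A ≤ M ^ (1 / (2 * r)) := by
    apply ciSup_le
    intro lam
    have h := Real.rpow_le_rpow (Real.rpow_nonneg (norm_nonneg _) _) (hpt lam)
      (by positivity : (0:ℝ) ≤ 1 / (2 * r))
    rwa [← Real.rpow_mul (norm_nonneg _), mul_one_div, div_self h2r.ne', Real.rpow_one] at h
  calc ber k A ^ (2 * r) ≤ (M ^ (1 / (2 * r))) ^ (2 * r) :=
        Real.rpow_le_rpow (ber_nonneg k A) hber h2r.le
    _ = M := by
        rw [← Real.rpow_mul hM, one_div_mul_cancel h2r.ne', Real.rpow_one]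
end

section
/- Let A be a bounded linear operator on H. Then for every real number r ≥ 1 and every α ∈ [0,1], ber(A)^{2r} ≤ ber(α·((|A| + |A*|)/2)^{2r} + (1−α)·|A*|^{2r}). -/
set_option synthInstance.maxHeartbeats 1000000
set_option maxHeartbeats 1000000

open scoped NNReal
open ContinuousLinearMap

section Helpers

set_option linter.unusedSectionVars false

open Polynomial RCLike

variable {H : Type*} [NormedAddCommGroup H] [InnerProductSpace ℂ H] [CompleteSpace H]

private lemma pow_intertwine (B X Y : H →L[ℂ] H) (h : B * X = Y * B) (n : ℕ) :
    B * X ^ n = Y ^ n * B := by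
  induction n with
  | zero => simp
  | succ n ih =>
    rw [pow_succ, pow_succ, ← mul_assoc, ih, mul_assoc, h, ← mul_assoc]

private lemma poly_intertwine (B X Y : H →L[ℂ] H) (h : B * X = Y * B) (p : ℝ[X]) :
    B * aeval X p = aeval Y p * B := by
  induction p using Polynomial.induction_on with
  | C r =>
    simp only [aeval_C]
    rw [← Algebra.commutes r B, Algebra.commutes]
  | add p q hp hq => simp [mul_add, add_mul, hp, hq]
  | monomial n r ih =>
    simp only [map_mul, aeval_C, map_pow, aeval_X]
    calc B * (algebraMap ℝ (H →L[ℂ] H) r * X ^ (n+1))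
        = algebraMap ℝ (H →L[ℂ] H) r * (B * X ^ (n+1)) := by
          rw [← mul_assoc, ← Algebra.commutes r B, mul_assoc]
      _ = algebraMap ℝ (H →L[ℂ] H) r * (Y ^ (n+1) * B) := by
          rw [pow_intertwine B X Y h]
      _ = algebraMap ℝ (H →L[ℂ] H) r * Y ^ (n+1) * B := by rw [mul_assoc]

/-- Intertwining property of the real continuous functional calculus:
if `B * X = Y * B` then `B * f(X) = f(Y) * B`. -/
private lemma cfc_intertwine {B X Y : H →L[ℂ] H} (hX : IsSelfAdjoint X) (hY : IsSelfAdjoint Y)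
    (h : B * X = Y * B) {a b : ℝ} (hXs : spectrum ℝ X ⊆ Set.Icc a b)
    (hYs : spectrum ℝ Y ⊆ Set.Icc a b)
    {f : ℝ → ℝ} (hf : ContinuousOn f (Set.Icc a b)) :
    B * cfc f X = cfc f Y * B := by
  have hfX : ContinuousOn f (spectrum ℝ X) := hf.mono hXs
  have hfY : ContinuousOn f (spectrum ℝ Y) := hf.mono hYs
  have key : ∀ δ : ℝ, 0 < δ → ‖B * cfc f X - cfc f Y * B‖ ≤ 2 * ‖B‖ * δ := by
    intro δ hδ
    -- Weierstrass approximation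
    let g : C(Set.Icc a b, ℝ) := ⟨(Set.Icc a b).restrict f, hf.restrict⟩
    have hg : g ∈ closure (polynomialFunctions (Set.Icc a b) : Set C(Set.Icc a b, ℝ)) := by
      have h2 : g ∈ (polynomialFunctions (Set.Icc a b)).topologicalClosure := by
        rw [polynomialFunctions_closure_eq_top]; trivial
      exact h2
    obtain ⟨q, hqmem, hqdist⟩ := Metric.mem_closure_iff.mp hg δ hδ
    rw [polynomialFunctions_coe] at hqmem
    obtain ⟨p, rfl⟩ := hqmem
    have hclose : ∀ t ∈ Set.Icc a b, |f t - p.eval t| ≤ δ := by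
      intro t ht
      have := ContinuousMap.dist_apply_le_dist (f := g)
        (g := Polynomial.toContinuousMapOnAlgHom (Set.Icc a b) p) ⟨t, ht⟩
      have h2 : dist (f t) (p.eval t)
          ≤ dist g (Polynomial.toContinuousMapOnAlgHom (Set.Icc a b) p) := this
      rw [Real.dist_eq] at h2
      exact h2.trans hqdist.le
    have hnX : ‖cfc f X - cfc (fun t => p.eval t) X‖ ≤ δ := by
      rw [← cfc_sub f (fun t => p.eval t) X hfX (by fun_prop)]
      exact norm_cfc_le hδ.le fun t ht => by
        simpa [Real.norm_eq_abs] using hclose t (hXs ht)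
    have hnY : ‖cfc f Y - cfc (fun t => p.eval t) Y‖ ≤ δ := by
      rw [← cfc_sub f (fun t => p.eval t) Y hfY (by fun_prop)]
      exact norm_cfc_le hδ.le fun t ht => by
        simpa [Real.norm_eq_abs] using hclose t (hYs ht)
    have hmid : B * cfc (fun t => p.eval t) X = cfc (fun t => p.eval t) Y * B := by
      rw [cfc_polynomial p X hX, cfc_polynomial p Y hY]
      exact poly_intertwine B X Y h p
    calc ‖B * cfc f X - cfc f Y * B‖
        = ‖B * (cfc f X - cfc (fun t => p.eval t) X)
            + (cfc (fun t => p.eval t) Y - cfc f Y) * B‖ := by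
          rw [mul_sub, sub_mul, hmid]; abel_nf
      _ ≤ ‖B * (cfc f X - cfc (fun t => p.eval t) X)‖
            + ‖(cfc (fun t => p.eval t) Y - cfc f Y) * B‖ := norm_add_le _ _
      _ ≤ ‖B‖ * δ + δ * ‖B‖ := by
          have e1 : ‖B * (cfc f X - cfc (fun t => p.eval t) X)‖ ≤ ‖B‖ * δ :=
            (norm_mul_le _ _).trans (by gcongr)
          have h3 : ‖cfc (fun t => p.eval t) Y - cfc f Y‖ ≤ δ := by rwa [norm_sub_rev]
          have e2 : ‖(cfc (fun t => p.eval t) Y - cfc f Y) * B‖ ≤ δ * ‖B‖ :=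
            (norm_mul_le _ _).trans (by gcongr)
          exact add_le_add e1 e2
      _ = 2 * ‖B‖ * δ := by ring
  have : ‖B * cfc f X - cfc f Y * B‖ ≤ 0 := by
    refine le_of_forall_pos_le_add fun η hη => ?_
    have h1 := key (η / (2 * ‖B‖ + 1)) (by positivity)
    calc ‖B * cfc f X - cfc f Y * B‖ ≤ 2 * ‖B‖ * (η / (2 * ‖B‖ + 1)) := h1
      _ ≤ η := by
          have hb : (0:ℝ) ≤ ‖B‖ := norm_nonneg B
          rw [mul_div_assoc', div_le_iff₀ (by positivity)]
          nlinarith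
      _ = 0 + η := (zero_add η).symm
  exact sub_eq_zero.mp (norm_eq_zero.mp (le_antisymm this (norm_nonneg _)))

private lemma inner_re_nonneg {T : H →L[ℂ] H} (hT : 0 ≤ T) (x : H) :
    0 ≤ re (inner ℂ (T x) x : ℂ) :=
  ((ContinuousLinearMap.nonneg_iff_isPositive T).mp hT).re_inner_nonneg_left x

private lemma inner_re_mono {T S : H →L[ℂ] H} (h : T ≤ S) (x : H) :
    re (inner ℂ (T x) x : ℂ) ≤ re (inner ℂ (S x) x : ℂ) := by
  have h0 : (0:H →L[ℂ] H) ≤ S - T := sub_nonneg.mpr h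
  have := inner_re_nonneg h0 x
  simp only [ContinuousLinearMap.sub_apply, inner_sub_left, map_sub] at this
  linarith

private lemma inner_re_smul_left (c : ℝ) (u v : H) :
    re (inner ℂ (c • u) v : ℂ) = c * re (inner ℂ u v : ℂ) := by
  rw [RCLike.real_smul_eq_coe_smul (K := ℂ), inner_smul_left, RCLike.conj_ofReal, re_ofReal_mul]

private lemma inner_re_one (x : H) (hx : ‖x‖ = 1) :
    re (inner ℂ ((1 : H →L[ℂ] H) x) x : ℂ) = 1 := by
  simp [ContinuousLinearMap.one_apply, inner_self_eq_norm_sq, hx]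

/-- McCarthy / Hölder-type inequality via the tangent line trick. -/
private lemma mccarthy_s6 {T : H →L[ℂ] H} (hT : 0 ≤ T) {x : H} (hx : ‖x‖ = 1) {p : ℝ}
    (hp : 1 ≤ p) :
    re (inner ℂ (T x) x : ℂ) ^ p ≤ re (inner ℂ (cfc (fun t : ℝ => t ^ p) T x) x : ℂ) := by
  have hTsa : IsSelfAdjoint T := IsSelfAdjoint.of_nonneg hT
  have hsp : ∀ t ∈ spectrum ℝ T, 0 ≤ t := fun t ht => spectrum_nonneg_of_nonneg hT ht
  have hcont : ContinuousOn (fun t : ℝ => t ^ p) (spectrum ℝ T) := by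
    apply ContinuousOn.rpow_const continuousOn_id
    intro t ht; exact Or.inr (by linarith)
  have hnn : (0:H →L[ℂ] H) ≤ cfc (fun t : ℝ => t ^ p) T :=
    cfc_nonneg fun t ht => Real.rpow_nonneg (hsp t ht) p
  set c := re (inner ℂ (T x) x : ℂ) with hc
  have hc0 : 0 ≤ c := inner_re_nonneg hT x
  rcases eq_or_lt_of_le hc0 with hczero | hcpos
  · rw [← hczero, Real.zero_rpow (by linarith : p ≠ 0)]
    exact inner_re_nonneg hnn x
  · set k := p * c ^ (p - 1) with hk
    have tangent : ∀ t : ℝ, 0 ≤ t → (c ^ p - k * c) + k * t ≤ t ^ p := by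
      intro t ht
      have hs : (-1:ℝ) ≤ t / c - 1 := by
        have : (0:ℝ) ≤ t / c := by positivity
        linarith
      have hb := one_add_mul_self_le_rpow_one_add hs hp
      have h1 : 1 + (t / c - 1) = t / c := by ring
      rw [h1] at hb
      have hb2 : c ^ p * (1 + p * (t / c - 1)) ≤ c ^ p * (t / c) ^ p :=
        mul_le_mul_of_nonneg_left hb (Real.rpow_nonneg hc0 p)
      have h2 : c ^ p * (t / c) ^ p = t ^ p := by
        rw [← Real.mul_rpow hc0 (by positivity), mul_div_cancel₀ t (ne_of_gt hcpos)]
      have h3 : c ^ p * (1 + p * (t / c - 1)) = (c ^ p - k * c) + k * t := by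
        have h4 : c ^ (p - 1) = c ^ p / c := by
          rw [Real.rpow_sub hcpos, Real.rpow_one]
        rw [hk, h4]
        field_simp
        ring
      rw [h2, h3] at hb2
      exact hb2
    have hcfc_eq : cfc (fun t : ℝ => (c ^ p - k * c) + k * t) T
        = algebraMap ℝ (H →L[ℂ] H) (c ^ p - k * c) + k • T := by
      rw [cfc_add T (fun _ => c ^ p - k * c) (fun t => k * t) (by fun_prop) (by fun_prop),
        cfc_const _ T hTsa, cfc_const_mul k (fun t : ℝ => t) T (by fun_prop),
        cfc_id' ℝ T hTsa]
    have hop : algebraMap ℝ (H →L[ℂ] H) (c ^ p - k * c) + k • T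
        ≤ cfc (fun t : ℝ => t ^ p) T := by
      rw [← hcfc_eq]
      exact cfc_mono (fun t ht => tangent t (hsp t ht)) (by fun_prop) hcont
    have := inner_re_mono hop x
    refine le_trans (le_of_eq ?_) this
    have expand : re (inner ℂ ((algebraMap ℝ (H →L[ℂ] H) (c ^ p - k * c) + k • T) x) x : ℂ)
        = (c ^ p - k * c) + k * c := by
      rw [Algebra.algebraMap_eq_smul_one]
      simp only [ContinuousLinearMap.add_apply, inner_add_left, map_add,
        ContinuousLinearMap.smul_apply]
      rw [inner_re_smul_left, inner_re_smul_left, inner_re_one x hx, hc]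
      ring
    rw [expand]; ring

private lemma rpow_eq_real_cfc {T : H →L[ℂ] H} (hT : 0 ≤ T) (y : ℝ) :
    CFC.rpow T y = cfc (fun t : ℝ => t ^ y) T := by
  have h1 : CFC.rpow T y = cfc (fun s : ℝ≥0 => s ^ y) T := rfl
  rw [h1, cfc_nnreal_eq_real (fun s : ℝ≥0 => s ^ y) T hT]
  apply cfc_congr
  intro t ht
  have ht0 : 0 ≤ t := spectrum_nonneg_of_nonneg hT ht
  simp only [NNReal.coe_rpow, Real.coe_toNNReal t ht0]

private lemma sqrt_eq_real_cfc {T : H →L[ℂ] H} (hT : 0 ≤ T) :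
    CFC.sqrt T = cfc Real.sqrt T := by
  rw [CFC.sqrt_eq_cfc, cfc_nnreal_eq_real NNReal.sqrt T hT]
  apply cfc_congr
  intro t ht
  show ((NNReal.sqrt t.toNNReal : ℝ≥0) : ℝ) = Real.sqrt t
  rw [Real.coe_sqrt, Real.coe_toNNReal t (spectrum_nonneg_of_nonneg hT ht)]

private lemma rpow_sqrt_comp {T : H →L[ℂ] H} (hT : 0 ≤ T) {r : ℝ} (hr : 1 ≤ r) :
    CFC.rpow (CFC.sqrt T) (2 * r) = cfc (fun t : ℝ => t ^ r) T := by
  have hy : (((2 * r).toNNReal : ℝ≥0) : ℝ) = 2 * r := Real.coe_toNNReal _ (by linarith)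
  have h := CFC.rpow_sqrt_nnreal (a := T) (x := (2 * r).toNNReal) hT
  rw [hy] at h
  have h2 : (2 * r) / 2 = r := by ring
  rw [h2] at h
  have h3 : CFC.rpow (CFC.sqrt T) (2 * r) = CFC.sqrt T ^ (2 * r) := rfl
  have h4 : CFC.rpow T r = T ^ r := rfl
  rw [h3, h, ← h4, rpow_eq_real_cfc hT r]

/-- Mixed Schwarz inequality with an `ε`-regularization. -/
private lemma mixed_schwarz_eps (A : H →L[ℂ] H) (x : H) {ε : ℝ} (hε : 0 < ε) :
    ‖(inner ℂ (A x) x : ℂ)‖ ^ 2 ≤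
      (re (inner ℂ (cfc Real.sqrt (adjoint A * A) x) x : ℂ) + Real.sqrt ε * ‖x‖ ^ 2) *
        re (inner ℂ (cfc Real.sqrt (A * adjoint A) x) x : ℂ) := by
  set P := adjoint A * A with hPdef
  set Q := A * adjoint A with hQdef
  have hP : (0:H →L[ℂ] H) ≤ P := by
    simpa [hPdef, star_eq_adjoint] using star_mul_self_nonneg A
  have hQ : (0:H →L[ℂ] H) ≤ Q := by
    simpa [hQdef, star_eq_adjoint] using mul_star_self_nonneg A
  have hPsa : IsSelfAdjoint P := .of_nonneg hP
  have hQsa : IsSelfAdjoint Q := .of_nonneg hQ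
  have hPsp : ∀ t ∈ spectrum ℝ P, 0 ≤ t := fun t ht => spectrum_nonneg_of_nonneg hP ht
  have hQsp : ∀ t ∈ spectrum ℝ Q, 0 ≤ t := fun t ht => spectrum_nonneg_of_nonneg hQ ht
  set C := max (‖P‖ * ‖(1:H →L[ℂ] H)‖) (‖Q‖ * ‖(1:H →L[ℂ] H)‖) with hC
  have hPsub : spectrum ℝ P ⊆ Set.Icc 0 C := fun t ht =>
    ⟨hPsp t ht, (le_abs_self t).trans
      ((spectrum.norm_le_norm_mul_of_mem ht).trans (le_max_left _ _))⟩
  have hQsub : spectrum ℝ Q ⊆ Set.Icc 0 C := fun t ht =>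
    ⟨hQsp t ht, (le_abs_self t).trans
      ((spectrum.norm_le_norm_mul_of_mem ht).trans (le_max_right _ _))⟩
  set g1 : ℝ → ℝ := fun t => Real.sqrt (t + ε) with hg1def
  set g2 : ℝ → ℝ := fun t => (Real.sqrt (t + ε))⁻¹ with hg2def
  set g3 : ℝ → ℝ := fun t => Real.sqrt (Real.sqrt (t + ε)) with hg3def
  have hg1 : Continuous g1 := Real.continuous_sqrt.comp (continuous_id.add continuous_const)
  have hg3 : Continuous g3 := Real.continuous_sqrt.comp hg1
  have hg2I : ContinuousOn g2 (Set.Icc 0 C) := by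
    apply ContinuousOn.inv₀ hg1.continuousOn
    intro t ht
    exact ne_of_gt (Real.sqrt_pos.mpr (by linarith [ht.1]))
  have hg2P : ContinuousOn g2 (spectrum ℝ P) := hg2I.mono hPsub
  have hg2Q : ContinuousOn g2 (spectrum ℝ Q) := hg2I.mono hQsub
  set S1 := cfc g1 P with hS1
  set S2 := cfc g2 P with hS2
  set S3 := cfc g3 P with hS3
  set T1 := cfc g1 Q with hT1
  set T2 := cfc g2 Q with hT2
  have hAP : A * P = Q * A := (mul_assoc A (adjoint A) A).symm
  have e1 : S3 * S3 = S1 := by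
    rw [hS3, hS1, ← cfc_mul g3 g3 P hg3.continuousOn hg3.continuousOn]
    exact cfc_congr fun t ht => Real.mul_self_sqrt (Real.sqrt_nonneg _)
  have e2 : S2 * S1 = 1 := by
    rw [hS2, hS1, ← cfc_mul g2 g1 P hg2P hg1.continuousOn]
    have h0 : cfc (fun t => g2 t * g1 t) P = cfc (fun _ : ℝ => (1:ℝ)) P :=
      cfc_congr fun t ht =>
        inv_mul_cancel₀ (ne_of_gt (Real.sqrt_pos.mpr (by linarith [hPsp t ht])))
    rw [h0, cfc_const 1 P hPsa, map_one]
  have e3 : A * S2 = T2 * A := cfc_intertwine hPsa hQsa hAP hPsub hQsub hg2I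
  have e4 : A * S1 = T1 * A := cfc_intertwine hPsa hQsa hAP hPsub hQsub hg1.continuousOn
  have hsa3 : IsSelfAdjoint S3 := cfc_predicate g3 P
  have hsaT2 : IsSelfAdjoint T2 := cfc_predicate g2 Q
  set M := T2 * A * S3 with hM
  have hAM : A = M * S3 := by
    calc A = A * (S2 * S1) := by rw [e2, mul_one]
      _ = (A * S2) * S1 := by rw [mul_assoc]
      _ = (T2 * A) * (S3 * S3) := by rw [e3, e1]
      _ = M * S3 := by rw [hM, ← mul_assoc]
  have key : (inner ℂ (A x) x : ℂ) = inner ℂ (S3 x) (adjoint M x) := by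
    rw [hAM]
    have : ((M * S3) x) = M (S3 x) := rfl
    rw [this, ← ContinuousLinearMap.adjoint_inner_right M (S3 x) x]
  have hbound : ‖(inner ℂ (A x) x : ℂ)‖ ≤ ‖S3 x‖ * ‖adjoint M x‖ := by
    rw [key]; exact norm_inner_le_norm _ _
  have hS3x : ‖S3 x‖ ^ 2 = re (inner ℂ (S1 x) x : ℂ) := by
    have h1 : (inner ℂ (S1 x) x : ℂ) = inner ℂ (S3 x) (S3 x) := by
      rw [show S1 x = ContinuousLinearMap.adjoint S3 (S3 x) from by
        rw [hsa3.adjoint_eq, ← e1]; rfl]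
      exact ContinuousLinearMap.adjoint_inner_left S3 x (S3 x)
    rw [← inner_self_eq_norm_sq (𝕜 := ℂ) (S3 x), h1]
  have hS1le : S1 ≤ cfc Real.sqrt P + Real.sqrt ε • 1 := by
    have hmono : S1 ≤ cfc (fun t => Real.sqrt t + Real.sqrt ε) P := by
      rw [hS1]
      refine cfc_mono (fun t ht => ?_) hg1.continuousOn (by fun_prop)
      have ht0 := hPsp t ht
      have h := Real.sqrt_le_sqrt (show t + ε ≤ (Real.sqrt t + Real.sqrt ε)^2 by
        nlinarith [Real.sq_sqrt ht0, Real.sq_sqrt hε.le, Real.sqrt_nonneg t,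
          Real.sqrt_nonneg ε])
      rwa [Real.sqrt_sq (by positivity)] at h
    refine hmono.trans (le_of_eq ?_)
    rw [cfc_add P Real.sqrt (fun _ => Real.sqrt ε) (by fun_prop) (by fun_prop),
      cfc_const _ P hPsa, Algebra.algebraMap_eq_smul_one]
  have hS3x_le : ‖S3 x‖ ^ 2
      ≤ re (inner ℂ (cfc Real.sqrt P x) x : ℂ) + Real.sqrt ε * ‖x‖ ^ 2 := by
    rw [hS3x]
    refine (inner_re_mono hS1le x).trans (le_of_eq ?_)
    simp only [ContinuousLinearMap.add_apply, inner_add_left, map_add,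
      ContinuousLinearMap.smul_apply, ContinuousLinearMap.one_apply]
    rw [inner_re_smul_left, inner_self_eq_norm_sq]
  have hMx : ‖adjoint M x‖ ^ 2 = re (inner ℂ ((M * adjoint M) x) x : ℂ) := by
    rw [← inner_self_eq_norm_sq (𝕜 := ℂ) (adjoint M x)]
    rw [ContinuousLinearMap.adjoint_inner_left M (adjoint M x) x]
    have : ((M * adjoint M) x) = M (adjoint M x) := rfl
    rw [this, inner_re_symm]
  have hadjM : adjoint M = S3 * (adjoint A * T2) := by
    rw [← star_eq_adjoint, hM, star_mul, star_mul, hsa3.star_eq, hsaT2.star_eq,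
      star_eq_adjoint]
  have hN : M * adjoint M = T2 * T1 * (Q * T2) := by
    calc M * adjoint M
        = T2 * A * S3 * (S3 * (adjoint A * T2)) := by rw [hadjM]
      _ = T2 * ((A * (S3 * S3)) * (adjoint A * T2)) := by noncomm_ring
      _ = T2 * ((A * S1) * (adjoint A * T2)) := by rw [e1]
      _ = T2 * ((T1 * A) * (adjoint A * T2)) := by rw [e4]
      _ = T2 * T1 * ((A * adjoint A) * T2) := by noncomm_ring
      _ = T2 * T1 * (Q * T2) := rfl
  have hidQ : ContinuousOn (fun t : ℝ => t) (spectrum ℝ Q) := continuousOn_id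
  have a1 : cfc (fun t : ℝ => g2 t * g1 t) Q = T2 * T1 :=
    cfc_mul g2 g1 Q hg2Q hg1.continuousOn
  have a2 : cfc (fun t : ℝ => t * g2 t) Q = Q * T2 := by
    have h := cfc_mul (fun t : ℝ => t) g2 Q hidQ hg2Q
    rwa [cfc_id' ℝ Q hQsa] at h
  have a3 : cfc (fun t : ℝ => (g2 t * g1 t) * (t * g2 t)) Q = T2 * T1 * (Q * T2) := by
    rw [cfc_mul (fun t : ℝ => g2 t * g1 t) (fun t : ℝ => t * g2 t) Q (by exact (hg2Q.mul hg1.continuousOn)) (hidQ.mul hg2Q), a1, a2]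
  have hNle : M * adjoint M ≤ cfc Real.sqrt Q := by
    rw [hN, ← a3]
    refine cfc_mono (fun t ht => ?_) ((hg2Q.mul hg1.continuousOn).mul (hidQ.mul hg2Q))
      Real.continuous_sqrt.continuousOn
    have ht0 := hQsp t ht
    have hpos : 0 < Real.sqrt (t + ε) := Real.sqrt_pos.mpr (by linarith)
    have hone : g2 t * g1 t = 1 := inv_mul_cancel₀ (ne_of_gt hpos)
    rw [hone, one_mul]
    have : t * g2 t = t / Real.sqrt (t + ε) := by rw [div_eq_mul_inv]
    rw [this, div_le_iff₀ hpos]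
    nlinarith [Real.sq_sqrt ht0, Real.sqrt_nonneg t,
      Real.sqrt_le_sqrt (show t ≤ t + ε by linarith), Real.sqrt_nonneg (t + ε)]
  have hMx_le : ‖adjoint M x‖ ^ 2 ≤ re (inner ℂ (cfc Real.sqrt Q x) x : ℂ) := by
    rw [hMx]
    exact inner_re_mono hNle x
  calc ‖(inner ℂ (A x) x : ℂ)‖ ^ 2
      ≤ (‖S3 x‖ * ‖adjoint M x‖) ^ 2 := by
        exact pow_le_pow_left₀ (norm_nonneg _) hbound 2
    _ = ‖S3 x‖ ^ 2 * ‖adjoint M x‖ ^ 2 := mul_pow _ _ 2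
    _ ≤ (re (inner ℂ (cfc Real.sqrt P x) x : ℂ) + Real.sqrt ε * ‖x‖ ^ 2) *
          re (inner ℂ (cfc Real.sqrt Q x) x : ℂ) := by
        refine mul_le_mul hS3x_le hMx_le (sq_nonneg _) ?_
        exact le_trans (sq_nonneg _) hS3x_le

/-- The mixed Schwarz inequality. -/
private lemma mixed_schwarz (A : H →L[ℂ] H) (x : H) (hx : ‖x‖ = 1) :
    ‖(inner ℂ (A x) x : ℂ)‖ ^ 2 ≤
      re (inner ℂ (cfc Real.sqrt (adjoint A * A) x) x : ℂ) *
        re (inner ℂ (cfc Real.sqrt (A * adjoint A) x) x : ℂ) := by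
  set a := re (inner ℂ (cfc Real.sqrt (adjoint A * A) x) x : ℂ)
  set b := re (inner ℂ (cfc Real.sqrt (A * adjoint A) x) x : ℂ) with hbdef
  have hQ : (0:H →L[ℂ] H) ≤ A * adjoint A := by
    simpa [star_eq_adjoint] using mul_star_self_nonneg A
  have hb0 : 0 ≤ b := inner_re_nonneg (cfc_nonneg fun t _ => Real.sqrt_nonneg t) x
  refine le_of_forall_pos_le_add fun η hη => ?_
  have hε : (0:ℝ) < (η / (b + 1)) ^ 2 := by positivity
  have h := mixed_schwarz_eps A x hε
  rw [Real.sqrt_sq (by positivity), hx] at h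
  calc ‖(inner ℂ (A x) x : ℂ)‖ ^ 2 ≤ (a + η / (b + 1) * 1 ^ 2) * b := h
    _ ≤ a * b + η := by
        have h1 : (a + η / (b + 1) * 1 ^ 2) * b = a * b + η * (b / (b + 1)) := by
          field_simp
        rw [h1]
        have h2 : b / (b + 1) ≤ 1 := by
          rw [div_le_one (by positivity)]; linarith
        nlinarith

private lemma op_smul_nonneg {T : H →L[ℂ] H} (hT : 0 ≤ T) {c : ℝ} (hc : 0 ≤ c) :
    (0 : H →L[ℂ] H) ≤ c • T := by
  rw [ContinuousLinearMap.nonneg_iff_isPositive] at hT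
  rw [ContinuousLinearMap.nonneg_iff_isPositive]
  constructor
  · rw [← ContinuousLinearMap.isSelfAdjoint_iff_isSymmetric]
    unfold IsSelfAdjoint
    rw [star_smul, star_trivial, hT.isSelfAdjoint.star_eq]
  · intro y
    have h : (c • T) y = c • (T y) := rfl
    show 0 ≤ re (inner ℂ ((c • T) y) y : ℂ)
    rw [h, inner_re_smul_left]
    exact mul_nonneg hc (hT.re_inner_nonneg_left y)

end Helpers

theorem berezin_power_inequality_mean_abs
    {H : Type*} [NormedAddCommGroup H] [InnerProductSpace ℂ H] [CompleteSpace H]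
    {Ω : Type*} [Nonempty Ω] (k : Ω → H) (hk : ∀ lam, ‖k lam‖ = 1)
    (A : H →L[ℂ] H) (r : ℝ) (hr : 1 ≤ r) (α : ℝ) (hα : α ∈ Set.Icc (0 : ℝ) 1) :
    ber k A ^ (2 * r) ≤
      ber k (α • CFC.rpow ((2 : ℝ)⁻¹ • (opAbs A + opAbs (adjoint A))) (2 * r)
        + (1 - α) • CFC.rpow (opAbs (adjoint A)) (2 * r)) := by
  classical
  set P := ContinuousLinearMap.adjoint A * A with hPdef
  set Q := A * ContinuousLinearMap.adjoint A with hQdef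
  have hP : (0:H →L[ℂ] H) ≤ P := by
    simpa [hPdef, star_eq_adjoint] using star_mul_self_nonneg A
  have hQ : (0:H →L[ℂ] H) ≤ Q := by
    simpa [hQdef, star_eq_adjoint] using mul_star_self_nonneg A
  have hopA : opAbs A = cfc Real.sqrt P := sqrt_eq_real_cfc hP
  have hopAadj : opAbs (ContinuousLinearMap.adjoint A) = CFC.sqrt Q := by
    rw [opAbs, adjoint_adjoint]
  have hopAadj' : opAbs (ContinuousLinearMap.adjoint A) = cfc Real.sqrt Q := by
    rw [hopAadj]; exact sqrt_eq_real_cfc hQ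
  set D := (2 : ℝ)⁻¹ • (opAbs A + opAbs (ContinuousLinearMap.adjoint A)) with hD
  have hD0 : (0:H →L[ℂ] H) ≤ D := by
    refine op_smul_nonneg (add_nonneg ?_ ?_) (by norm_num)
    · rw [hopA]; exact cfc_nonneg fun t _ => Real.sqrt_nonneg t
    · rw [hopAadj']; exact cfc_nonneg fun t _ => Real.sqrt_nonneg t
  set RHSop := α • CFC.rpow D (2 * r) + (1 - α) • CFC.rpow (opAbs (ContinuousLinearMap.adjoint A)) (2 * r)
    with hRHSop
  -- boundedness of the Berezin sets
  have bdd : ∀ T : H →L[ℂ] H,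
      BddAbove (Set.range fun lam => ‖(inner ℂ (T (k lam)) (k lam) : ℂ)‖) := by
    intro T
    refine ⟨‖T‖, ?_⟩
    rintro _ ⟨lam, rfl⟩
    calc ‖(inner ℂ (T (k lam)) (k lam) : ℂ)‖ ≤ ‖T (k lam)‖ * ‖k lam‖ := norm_inner_le_norm _ _
      _ ≤ (‖T‖ * ‖k lam‖) * ‖k lam‖ := by
          gcongr; exact T.le_opNorm (k lam)
      _ = ‖T‖ := by rw [hk lam]; ring
  have le_ber : ∀ (T : H →L[ℂ] H) lam,
      ‖(inner ℂ (T (k lam)) (k lam) : ℂ)‖ ≤ ber k T := fun T lam =>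
    le_ciSup (bdd T) lam
  have hr2 : (1:ℝ) ≤ 2 * r := by linarith
  have hr2pos : (0:ℝ) < 2 * r := by linarith
  -- pointwise estimate
  have key : ∀ lam : Ω, ‖(inner ℂ (A (k lam)) (k lam) : ℂ)‖ ^ (2 * r) ≤ ber k RHSop := by
    intro lam
    set x := k lam with hxdef
    have hx : ‖x‖ = 1 := hk lam
    set c := ‖(inner ℂ (A x) x : ℂ)‖ with hcdef
    have hc0 : (0:ℝ) ≤ c := norm_nonneg _
    set a := RCLike.re (inner ℂ (cfc Real.sqrt P x) x : ℂ) with hadef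
    set b := RCLike.re (inner ℂ (cfc Real.sqrt Q x) x : ℂ) with hbdef
    have ha0 : 0 ≤ a := inner_re_nonneg (cfc_nonneg fun t _ => Real.sqrt_nonneg t) x
    have hb0 : 0 ≤ b := inner_re_nonneg (cfc_nonneg fun t _ => Real.sqrt_nonneg t) x
    have hms : c ^ 2 ≤ a * b := mixed_schwarz A x hx
    have hamgm : c ≤ (a + b) / 2 := by nlinarith [sq_nonneg (a - b)]
    -- first branch
    have hDx : RCLike.re (inner ℂ (D x) x : ℂ) = (a + b) / 2 := by
      rw [hD, hopA, hopAadj']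
      have : ((2 : ℝ)⁻¹ • (cfc Real.sqrt P + cfc Real.sqrt Q)) x
          = (2 : ℝ)⁻¹ • ((cfc Real.sqrt P + cfc Real.sqrt Q) x) := rfl
      rw [this, inner_re_smul_left]
      simp only [ContinuousLinearMap.add_apply, inner_add_left, map_add]
      rw [← hadef, ← hbdef]; ring
    have hbranch1 : c ^ (2 * r) ≤ RCLike.re (inner ℂ (CFC.rpow D (2 * r) x) x : ℂ) := by
      have h1 : c ^ (2 * r) ≤ RCLike.re (inner ℂ (D x) x : ℂ) ^ (2 * r) := by
        apply Real.rpow_le_rpow hc0 _ hr2pos.le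
        rw [hDx]; exact hamgm
      have h2 := mccarthy_s6 hD0 hx hr2
      rw [rpow_eq_real_cfc hD0 (2 * r)]
      exact h1.trans h2
    -- second branch
    have hcadj : c ≤ ‖ContinuousLinearMap.adjoint A x‖ := by
      have h1 : (inner ℂ (A x) x : ℂ) = inner ℂ x (ContinuousLinearMap.adjoint A x) :=
        (ContinuousLinearMap.adjoint_inner_right A x x).symm
      rw [hcdef, h1]
      calc ‖(inner ℂ x (ContinuousLinearMap.adjoint A x) : ℂ)‖
          ≤ ‖x‖ * ‖ContinuousLinearMap.adjoint A x‖ := norm_inner_le_norm _ _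
        _ = ‖ContinuousLinearMap.adjoint A x‖ := by rw [hx, one_mul]
    have hQx : ‖ContinuousLinearMap.adjoint A x‖ ^ 2 = RCLike.re (inner ℂ (Q x) x : ℂ) := by
      rw [← inner_self_eq_norm_sq (𝕜 := ℂ)]
      have h1 : (Q x) = A (ContinuousLinearMap.adjoint A x) := rfl
      rw [h1, ← ContinuousLinearMap.adjoint_inner_right A (ContinuousLinearMap.adjoint A x) x]
    have hc2Q : c ^ 2 ≤ RCLike.re (inner ℂ (Q x) x : ℂ) := by
      rw [← hQx]
      exact pow_le_pow_left₀ hc0 hcadj 2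
    have hbranch2 : c ^ (2 * r)
        ≤ RCLike.re (inner ℂ (CFC.rpow (opAbs (ContinuousLinearMap.adjoint A)) (2 * r) x) x : ℂ) := by
      have hsplit : c ^ (2 * r) = (c ^ 2 : ℝ) ^ r := by
        rw [show (2:ℝ) * r = ((2:ℕ):ℝ) * r by norm_num, Real.rpow_mul hc0,
          Real.rpow_natCast]
      have h1 : (c ^ 2 : ℝ) ^ r ≤ RCLike.re (inner ℂ (Q x) x : ℂ) ^ r :=
        Real.rpow_le_rpow (sq_nonneg c) hc2Q (by linarith)
      have h2 := mccarthy_s6 hQ hx hr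
      have h3 : CFC.rpow (opAbs (ContinuousLinearMap.adjoint A)) (2 * r)
          = cfc (fun t : ℝ => t ^ r) Q := by
        rw [hopAadj]; exact rpow_sqrt_comp hQ hr
      rw [h3, hsplit]
      exact h1.trans h2
    -- convex combination
    have hcomb : c ^ (2 * r) ≤ RCLike.re (inner ℂ (RHSop x) x : ℂ) := by
      have hRx : RCLike.re (inner ℂ (RHSop x) x : ℂ)
          = α * RCLike.re (inner ℂ (CFC.rpow D (2 * r) x) x : ℂ)
            + (1 - α) * RCLike.re
              (inner ℂ (CFC.rpow (opAbs (ContinuousLinearMap.adjoint A)) (2 * r) x) x : ℂ) := by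
        rw [hRHSop]
        have : (α • CFC.rpow D (2 * r)
            + (1 - α) • CFC.rpow (opAbs (ContinuousLinearMap.adjoint A)) (2 * r)) x
            = α • (CFC.rpow D (2 * r) x)
              + (1 - α) • (CFC.rpow (opAbs (ContinuousLinearMap.adjoint A)) (2 * r) x) := rfl
        rw [this]
        simp only [inner_add_left, map_add]
        rw [inner_re_smul_left, inner_re_smul_left]
      rw [hRx]
      have m1 := mul_le_mul_of_nonneg_left hbranch1 hα.1
      have m2 := mul_le_mul_of_nonneg_left hbranch2 (by linarith [hα.2] : (0:ℝ) ≤ 1 - α)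
      nlinarith
    calc c ^ (2 * r) ≤ RCLike.re (inner ℂ (RHSop x) x : ℂ) := hcomb
      _ ≤ ‖(inner ℂ (RHSop x) x : ℂ)‖ := RCLike.re_le_norm _
      _ ≤ ber k RHSop := le_ber RHSop lam
  -- conclude via sup manipulation
  have hM0 : 0 ≤ ber k RHSop := by
    obtain lam := Classical.arbitrary Ω
    exact (norm_nonneg _).trans (le_ber RHSop lam)
  have hberA0 : 0 ≤ ber k A := by
    obtain lam := Classical.arbitrary Ω
    exact (norm_nonneg _).trans (le_ber A lam)
  have hsup : ber k A ≤ ber k RHSop ^ (1 / (2 * r)) := by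
    refine ciSup_le fun lam => ?_
    have h1 := key lam
    have h2 := Real.rpow_le_rpow (Real.rpow_nonneg (norm_nonneg _) _) h1
      (by positivity : (0:ℝ) ≤ 1 / (2 * r))
    rwa [← Real.rpow_mul (norm_nonneg _), mul_one_div, div_self (ne_of_gt hr2pos),
      Real.rpow_one] at h2
  calc ber k A ^ (2 * r) ≤ (ber k RHSop ^ (1 / (2 * r))) ^ (2 * r) :=
      Real.rpow_le_rpow hberA0 hsup hr2pos.le
    _ = ber k RHSop := by
        rw [← Real.rpow_mul hM0, one_div, inv_mul_cancel₀ (ne_of_gt hr2pos), Real.rpow_one]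
end
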